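/- For any knot sequence, any degree m ≥ 1, any index i with −m ≤ i ≤ n−1, and every u ∈ ℝ that is not equal to any of the knots t_{−m}, …, t_{n+m}, the B-spline basis functions satisfy m·N_{m,i}(u) + (t_i − u)·N′_{m,i}(u) = m·(t_{m+i+1} − t_i)·N_{m−1,i+1}(u)/(t_{m+i+1} − t_{i+1}), where N′_{m,i} denotes the derivative of N_{m,i}, and where the right-hand side is taken to be 0 if t_{m+i+1} = t_{i+1}. -/

import Mathlib

/-- The B-spline basis functions `N_{p,i}` of degree `p` over the knot
sequence `t`, defined by the de Boor–Cox recursion, with the conventions that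
a fraction with vanishing denominator is replaced by `0` (automatic for real
division in Lean) and that `N_{p,q} ≡ 0` whenever `q < -p` or `q ≥ n`. -/
noncomputable def bspline (t : ℤ → ℝ) (n : ℕ) : ℕ → ℤ → ℝ → ℝ
  | 0 => fun i u =>
      if 0 ≤ i ∧ i < (n : ℤ) ∧ t i ≤ u ∧ u < t (i + 1) then 1 else 0
  | p + 1 => fun i u =>
      if -((p : ℤ) + 1) ≤ i ∧ i < (n : ℤ) then
        (u - t i) / (t ((p : ℤ) + 1 + i) - t i) * bspline t n p i u
          + (t ((p : ℤ) + 1 + i + 1) - u) / (t ((p : ℤ) + 1 + i + 1) - t (i + 1))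
              * bspline t n p (i + 1) u
      else 0

/-- The `k`-th Bernstein basis polynomial of degree `p`. -/
noncomputable def bern (p k : ℕ) (x : ℝ) : ℝ :=
  (p.choose k : ℝ) * x ^ k * (1 - x) ^ (p - k)

/-- Formal derivative of the B-spline, following the product rule. -/
noncomputable def bsplineD (t : ℤ → ℝ) (n : ℕ) : ℕ → ℤ → ℝ → ℝ
  | 0 => fun _ _ => 0
  | p + 1 => fun i u =>
      if -((p : ℤ) + 1) ≤ i ∧ i < (n : ℤ) then
        1 / (t ((p : ℤ) + 1 + i) - t i) * bspline t n p i u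
          + (u - t i) / (t ((p : ℤ) + 1 + i) - t i) * bsplineD t n p i u
          + (0 - 1) / (t ((p : ℤ) + 1 + i + 1) - t (i + 1)) * bspline t n p (i + 1) u
          + (t ((p : ℤ) + 1 + i + 1) - u) / (t ((p : ℤ) + 1 + i + 1) - t (i + 1))
              * bsplineD t n p (i + 1) u
      else 0

lemma bspline_out {t : ℤ → ℝ} {n : ℕ} {p : ℕ} {j : ℤ} (u : ℝ)
    (h : j < -(p : ℤ) ∨ (n : ℤ) ≤ j) : bspline t n p j u = 0 := by
  cases p with
  | zero => simp only [bspline]; rw [if_neg]; rintro ⟨h1, h2, -⟩; omega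
  | succ q => simp only [bspline]; rw [if_neg]; push_cast; rintro ⟨h1, h2⟩; omega

lemma bsplineD_out {t : ℤ → ℝ} {n : ℕ} {p : ℕ} {j : ℤ} (u : ℝ)
    (h : j < -(p : ℤ) ∨ (n : ℤ) ≤ j) : bsplineD t n p j u = 0 := by
  cases p with
  | zero => rfl
  | succ q => simp only [bsplineD]; rw [if_neg]; push_cast; rintro ⟨h1, h2⟩; omega

/-- Unconditional de Boor–Cox recursion. -/
lemma bspline_succ (t : ℤ → ℝ) (n : ℕ) (p : ℕ) (j : ℤ) (u : ℝ) :
    bspline t n (p + 1) j u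
      = (u - t j) / (t ((p : ℤ) + 1 + j) - t j) * bspline t n p j u
          + (t ((p : ℤ) + 1 + j + 1) - u) / (t ((p : ℤ) + 1 + j + 1) - t (j + 1))
              * bspline t n p (j + 1) u := by
  by_cases hc : -((p : ℤ) + 1) ≤ j ∧ j < (n : ℤ)
  · simp only [bspline, if_pos hc]
  · simp only [bspline, if_neg hc]
    rw [bspline_out u (by omega), bspline_out u (by omega)]
    ring

lemma bsplineD_succ (t : ℤ → ℝ) (n : ℕ) (p : ℕ) (j : ℤ) (u : ℝ) :
    bsplineD t n (p + 1) j u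
      = 1 / (t ((p : ℤ) + 1 + j) - t j) * bspline t n p j u
          + (u - t j) / (t ((p : ℤ) + 1 + j) - t j) * bsplineD t n p j u
          + (0 - 1) / (t ((p : ℤ) + 1 + j + 1) - t (j + 1)) * bspline t n p (j + 1) u
          + (t ((p : ℤ) + 1 + j + 1) - u) / (t ((p : ℤ) + 1 + j + 1) - t (j + 1))
              * bsplineD t n p (j + 1) u := by
  by_cases hc : -((p : ℤ) + 1) ≤ j ∧ j < (n : ℤ)
  · simp only [bsplineD, if_pos hc]
  · simp only [bsplineD, if_neg hc]
    rw [bspline_out u (by omega), bspline_out u (by omega),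
      bsplineD_out u (by omega), bsplineD_out u (by omega)]
    ring

lemma bspline_hasDerivAt (t : ℤ → ℝ) (n : ℕ) (u : ℝ)
    (hu : ∀ k : ℤ, 0 ≤ k → k ≤ (n : ℤ) → u ≠ t k) :
    ∀ (p : ℕ) (j : ℤ), HasDerivAt (bspline t n p j) (bsplineD t n p j u) u := by
  intro p
  induction p with
  | zero =>
    intro j
    show HasDerivAt _ (0 : ℝ) u
    by_cases hr : 0 ≤ j ∧ j < (n : ℤ)
    · have h1 : u ≠ t j := hu j hr.1 (by omega)
      have h2 : u ≠ t (j + 1) := hu (j + 1) (by omega) (by omega)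
      apply (hasDerivAt_const u (bspline t n 0 j u)).congr_of_eventuallyEq
      have hA : ∀ᶠ x in nhds u, ((t j ≤ x) ↔ (t j ≤ u)) := by
        rcases h1.lt_or_gt with h | h
        · filter_upwards [eventually_lt_nhds h] with x hx
          simp [not_le.2 hx, not_le.2 h]
        · filter_upwards [eventually_gt_nhds h] with x hx
          simp [hx.le, h.le]
      have hB : ∀ᶠ x in nhds u, ((x < t (j + 1)) ↔ (u < t (j + 1))) := by
        rcases h2.lt_or_gt with h | h
        · filter_upwards [eventually_lt_nhds h] with x hx
          simp [hx, h]
        · filter_upwards [eventually_gt_nhds h] with x hx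
          simp [not_lt.2 hx.le, not_lt.2 h.le]
      filter_upwards [hA, hB] with x hx1 hx2
      simp only [bspline]
      exact if_congr (and_congr Iff.rfl (and_congr Iff.rfl (and_congr hx1 hx2))) rfl rfl
    · have hfun : bspline t n 0 j = fun _ : ℝ => (0 : ℝ) := by
        funext x
        exact bspline_out x (by omega)
      rw [hfun]
      exact hasDerivAt_const u 0
  | succ p ih =>
    intro j
    have hfun : bspline t n (p + 1) j = fun x : ℝ =>
        (x - t j) / (t ((p : ℤ) + 1 + j) - t j) * bspline t n p j x
          + (t ((p : ℤ) + 1 + j + 1) - x) / (t ((p : ℤ) + 1 + j + 1) - t (j + 1))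
              * bspline t n p (j + 1) x := by
      funext x
      exact bspline_succ t n p j x
    rw [hfun, bsplineD_succ]
    have h1 : HasDerivAt (fun x : ℝ => (x - t j) / (t ((p : ℤ) + 1 + j) - t j))
        (1 / (t ((p : ℤ) + 1 + j) - t j)) u :=
      ((hasDerivAt_id u).sub_const (t j)).div_const _
    have h2 : HasDerivAt
        (fun x : ℝ => (t ((p : ℤ) + 1 + j + 1) - x) / (t ((p : ℤ) + 1 + j + 1) - t (j + 1)))
        ((0 - 1) / (t ((p : ℤ) + 1 + j + 1) - t (j + 1))) u :=
      ((hasDerivAt_const u _).sub (hasDerivAt_id u)).div_const _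
    have := (h1.mul (ih j)).add (h2.mul (ih (j + 1)))
    exact this.congr_deriv (by ring)

lemma bsplineD_formula (t : ℤ → ℝ) (n m : ℕ)
    (hmono : ∀ k l : ℤ, -(m : ℤ) ≤ k → k ≤ l → l ≤ (n : ℤ) + m → t k ≤ t l)
    (u : ℝ) :
    ∀ p : ℕ, p + 1 ≤ m → ∀ j : ℤ,
      bsplineD t n (p + 1) j u
        = ((p : ℝ) + 1) / (t ((p : ℤ) + 1 + j) - t j) * bspline t n p j u
            - ((p : ℝ) + 1) / (t ((p : ℤ) + 1 + j + 1) - t (j + 1)) * bspline t n p (j + 1) u := by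
  intro p
  induction p with
  | zero =>
    intro _ j
    rw [bsplineD_succ]
    show _ + _ * bsplineD t n 0 j u + _ + _ * bsplineD t n 0 (j+1) u = _
    simp only [bsplineD]
    push_cast
    ring
  | succ p ih =>
    intro hpm j
    by_cases hj : -((p : ℤ) + 2) ≤ j ∧ j ≤ (n : ℤ) - 1
    · rw [bsplineD_succ t n (p+1) j u, ih (by omega) j, ih (by omega) (j+1),
        bspline_succ t n p j u, bspline_succ t n p (j+1) u]
      push_cast
      rw [show ((p:ℤ)+1+1+j+1) = (p:ℤ)+3+j from by ring,
        show ((p:ℤ)+1+1+j) = (p:ℤ)+2+j from by ring,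
        show ((p:ℤ)+1+(j+1)+1) = (p:ℤ)+3+j from by ring,
        show ((p:ℤ)+1+j+1) = (p:ℤ)+2+j from by ring,
        show ((p:ℤ)+1+(j+1)) = (p:ℤ)+2+j from by ring,
        show ((j:ℤ)+1+1) = j+2 from by ring]
      have hK : (t ((p:ℤ)+2+j) - t j) * (t ((p:ℤ)+2+j) - t j)⁻¹ * (t ((p:ℤ)+2+j) - t (j+1))⁻¹
          = (t ((p:ℤ)+3+j) - t (j+1)) * (t ((p:ℤ)+3+j) - t (j+1))⁻¹
              * (t ((p:ℤ)+2+j) - t (j+1))⁻¹ := by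
        by_cases hD : t ((p:ℤ)+2+j) - t j = 0
        · have hd2 : t ((p:ℤ)+2+j) - t (j+1) = 0 := by
            have h1 : t j ≤ t (j+1) := hmono j (j+1) (by omega) (by omega) (by omega)
            have h2 : t (j+1) ≤ t ((p:ℤ)+2+j) := hmono (j+1) ((p:ℤ)+2+j) (by omega) (by omega) (by omega)
            have := sub_eq_zero.mp hD
            linarith
          rw [hD, hd2]
          simp
        · by_cases hD' : t ((p:ℤ)+3+j) - t (j+1) = 0
          · have hd2 : t ((p:ℤ)+2+j) - t (j+1) = 0 := by
              have h1 : t (j+1) ≤ t ((p:ℤ)+2+j) := hmono (j+1) ((p:ℤ)+2+j) (by omega) (by omega) (by omega)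
              have h2 : t ((p:ℤ)+2+j) ≤ t ((p:ℤ)+3+j) := hmono ((p:ℤ)+2+j) ((p:ℤ)+3+j) (by omega) (by omega) (by omega)
              have := sub_eq_zero.mp hD'
              linarith
            rw [hD', hd2]
            simp
          · rw [mul_inv_cancel₀ hD, mul_inv_cancel₀ hD']
      linear_combination (-((p:ℝ)+1)) * bspline t n p (j+1) u * hK
    · rw [bsplineD_out u (by push_cast; omega),
        bspline_out u (show j < -((p:ℤ)+1) ∨ (n:ℤ) ≤ j from by omega),
        bspline_out u (show j+1 < -((p:ℤ)+1) ∨ (n:ℤ) ≤ j+1 from by omega)]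
      ring

/-- `m·N_{m,i}(u) + (t_i − u)·N′_{m,i}(u)
      = m·(t_{m+i+1} − t_i)·N_{m−1,i+1}(u)/(t_{m+i+1} − t_{i+1})`
for every `u` which is not a knot (the right-hand side being `0` when
`t_{m+i+1} = t_{i+1}`, which is automatic for real division). -/
theorem bspline_diff_rec_right
    (m n : ℕ) (hm : 1 ≤ m) (hn : 1 ≤ n) (t : ℤ → ℝ)
    (hmono : ∀ k l : ℤ, -(m : ℤ) ≤ k → k ≤ l → l ≤ (n : ℤ) + m → t k ≤ t l)
    (h0n : t 0 < t n)
    (i : ℤ) (hi1 : -(m : ℤ) ≤ i) (hi2 : i ≤ (n : ℤ) - 1)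
    (u : ℝ) (hu : ∀ k : ℤ, -(m : ℤ) ≤ k → k ≤ (n : ℤ) + m → u ≠ t k) :
    (m : ℝ) * bspline t n m i u + (t i - u) * deriv (bspline t n m i) u
      = (m : ℝ) * (t ((m : ℤ) + i + 1) - t i)
          * (bspline t n (m - 1) (i + 1) u / (t ((m : ℤ) + i + 1) - t (i + 1))) := by
  obtain ⟨q, rfl⟩ : ∃ q, m = q + 1 := ⟨m - 1, by omega⟩
  have hu0 : ∀ k : ℤ, 0 ≤ k → k ≤ (n : ℤ) → u ≠ t k := fun k h1 h2 =>
    hu k (by omega) (by omega)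
  rw [(bspline_hasDerivAt t n u hu0 (q + 1) i).deriv,
    bsplineD_formula t n (q + 1) hmono u q (le_refl _) i,
    bspline_succ t n q i u]
  simp only [Nat.add_sub_cancel]
  push_cast
  ring
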